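/- arXiv:2102.08243 — 2 statements merged into one kernel-verified Lean document; each statement's English description precedes it below -/
import Mathlib

section
/- Let C : {0,1}^n × {0,1}^d → {0,1}^m, let k_max ≥ 1 and e be nonnegative integers with k_max ≤ n, and let ε > 0. Suppose C is a k →_ε (k+d−e) condenser for every real number k with 0 ≤ k ≤ k_max. Then the graph corresponding to C admits ((1−4ε)·2^d, 2·k_max·2^e) online matching up to size 2^{k_max}. -/
open Finset

/-- `P` is a probability distribution on the finite type `α`. -/
def IsDist {α : Type*} [Fintype α] (P : α → ℝ) : Prop :=
  (∀ a, 0 ≤ P a) ∧ ∑ a : α, P a = 1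

/-- `P` has min-entropy at least `k`: every point has probability at most `2^(−k)`. -/
noncomputable def MinEntropyGe {α : Type*} (P : α → ℝ) (k : ℝ) : Prop :=
  ∀ a, P a ≤ (2 : ℝ) ^ (-k)

/-- `P` and `Q` are `ε`-close: their statistical distance is at most `ε`. -/
def CloseDist {α : Type*} [Fintype α] (P Q : α → ℝ) (ε : ℝ) : Prop :=
  ∀ T : Finset α, |∑ a ∈ T, P a - ∑ a ∈ T, Q a| ≤ ε

/-- The distribution of `C(X, U_d)` where `X` has distribution `P` and `U_d` is
uniform on `{0,1}^d` and independent of `X`. -/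
noncomputable def outDist {n d m : ℕ} (C : (Fin n → Bool) → (Fin d → Bool) → (Fin m → Bool))
    (P : (Fin n → Bool) → ℝ) (y : Fin m → Bool) : ℝ :=
  ∑ x : Fin n → Bool, ∑ ρ : Fin d → Bool, if C x ρ = y then P x / 2 ^ d else 0

/-- `C` is a `k →_ε k'` condenser: for every distribution `X` on `{0,1}^n` with
min-entropy at least `k`, the distribution of `C(X, U_d)` is `ε`-close to some
distribution on `{0,1}^m` with min-entropy at least `k'`. -/
noncomputable def IsCondenser {n d m : ℕ}
    (C : (Fin n → Bool) → (Fin d → Bool) → (Fin m → Bool)) (k : ℝ) (ε : ℝ) (k' : ℝ) : Prop :=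
  ∀ P : (Fin n → Bool) → ℝ, IsDist P → MinEntropyGe P k →
    ∃ Q : (Fin m → Bool) → ℝ, IsDist Q ∧ MinEntropyGe Q k' ∧ CloseDist (outDist C P) Q ε

/-- The graph `Γ : L → ι → R` admits `(ℓ, r)` online matching up to size `K` if
there is an assignment function `f` from (list of requests, left node) to sets of
edge labels such that: (1) nodes not in the list get the empty set; (2) a node in
the list gets at least `ℓ` labels, and its assigned set is stable under extending
the list (within the size bound `K`); (3) for every right node `p` and every list,
at most `r` distinct listed nodes have an assigned edge ending in `p`. -/
def OnlineMatching {L R ι : Type*} (Γ : L → ι → R) (ℓ : ℝ) (r K : ℕ) : Prop :=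
  ∃ f : List L → L → Finset ι,
    (∀ S : List L, S.length ≤ K → ∀ x : L,
      (x ∉ S → f S x = ∅) ∧
      (x ∈ S →
        (ℓ ≤ ((f S x).card : ℝ) ∧
         ∀ S' : List L, S'.length ≤ K → S <+: S' → f S x = f S' x))) ∧
    (∀ S : List L, S.length ≤ K → ∀ p : R,
      {x : L | x ∈ S ∧ ∃ i ∈ f S x, Γ x i = p}.ncard ≤ r)

namespace OMC

variable {n d m : ℕ}

/-- state of the online process -/
structure St (n d m : ℕ) where
  seen : Finset (Fin n → Bool)
  asg : (Fin n → Bool) → Finset (Fin d → Bool)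

variable (Γ : (Fin n → Bool) → (Fin d → Bool) → (Fin m → Bool)) (ε : ℝ)

/-- number of edges from `x` into the set `T` of right vertices -/
def edges (x : Fin n → Bool) (T : Finset (Fin m → Bool)) : ℕ :=
  (univ.filter fun i => Γ x i ∈ T).card

/-- contributors of right vertex `p` -/
def contribs (st : St n d m) (p : Fin m → Bool) : Finset (Fin n → Bool) :=
  st.seen.filter fun x => ∃ i ∈ st.asg x, Γ x i = p

def load (st : St n d m) (p : Fin m → Bool) : ℕ := (contribs Γ st p).card

/-- set of right vertices of load at least `t` -/
def Lam (st : St n d m) (t : ℕ) : Finset (Fin m → Bool) :=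
  univ.filter fun p => t ≤ load Γ st p

lemma load_le_seen (st : St n d m) (p : Fin m → Bool) : load Γ st p ≤ st.seen.card :=
  card_le_card (filter_subset _ _)

lemma edges_empty (x : Fin n → Bool) : edges Γ x ∅ = 0 := by
  simp [edges]

lemma edges_mono (x : Fin n → Bool) {T T' : Finset (Fin m → Bool)} (h : T ⊆ T') :
    edges Γ x T ≤ edges Γ x T' := by
  apply card_le_card
  intro i hi
  simp only [mem_filter] at *
  exact ⟨hi.1, h hi.2⟩

lemma tau_ex (st : St n d m) (x : Fin n → Bool) (hε : 0 ≤ ε) :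
    ∃ t : ℕ, (edges Γ x (Lam Γ st t) : ℝ) ≤ 4 * ε * 2 ^ d := by
  refine ⟨st.seen.card + 1, ?_⟩
  have : Lam Γ st (st.seen.card + 1) = ∅ := by
    apply eq_empty_of_forall_notMem
    intro p hp
    simp only [Lam, mem_filter] at hp
    exact absurd (le_trans hp.2 (load_le_seen Γ st p)) (by omega)
  rw [this, edges_empty]
  push_cast
  positivity

open Classical in
/-- the threshold used when `x` arrives in state `st` -/
noncomputable def tau (st : St n d m) (x : Fin n → Bool) : ℕ :=
  if hε : 0 ≤ ε then Nat.find (tau_ex Γ ε st x hε) else 0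

lemma tau_spec (st : St n d m) (x : Fin n → Bool) (hε : 0 ≤ ε) :
    (edges Γ x (Lam Γ st (tau Γ ε st x)) : ℝ) ≤ 4 * ε * 2 ^ d := by
  classical
  rw [tau, dif_pos hε]
  exact Nat.find_spec (tau_ex Γ ε st x hε)

lemma tau_min {st : St n d m} {x : Fin n → Bool} (hε : 0 ≤ ε) {t : ℕ}
    (ht : t < tau Γ ε st x) :
    4 * ε * 2 ^ d < (edges Γ x (Lam Γ st t) : ℝ) := by
  classical
  rw [tau, dif_pos hε] at ht
  have := Nat.find_min (tau_ex Γ ε st x hε) ht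
  linarith [lt_of_not_ge this]

lemma tau_le {st : St n d m} {x : Fin n → Bool} (hε : 0 ≤ ε) {t : ℕ}
    (h : (edges Γ x (Lam Γ st t) : ℝ) ≤ 4 * ε * 2 ^ d) : tau Γ ε st x ≤ t := by
  classical
  rw [tau, dif_pos hε]
  exact Nat.find_le h

/-- one step of the online process -/
noncomputable def step (st : St n d m) (x : Fin n → Bool) : St n d m :=
  if x ∈ st.seen then st else
    { seen := insert x st.seen,
      asg := Function.update st.asg x
        (univ.filter fun i => load Γ st (Γ x i) < tau Γ ε st x) }

noncomputable def process (S : List (Fin n → Bool)) : St n d m :=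
  S.foldl (step Γ ε) ⟨∅, fun _ => ∅⟩

lemma process_append (S T : List (Fin n → Bool)) :
    process Γ ε (S ++ T) = T.foldl (step Γ ε) (process Γ ε S) :=
  List.foldl_append

lemma seen_step (st : St n d m) (x : Fin n → Bool) :
    (step Γ ε st x).seen = insert x st.seen := by
  rw [step]
  split
  · rw [insert_eq_self.2 ‹_›]
  · rfl

lemma seen_foldl (T : List (Fin n → Bool)) (st : St n d m) :
    (T.foldl (step Γ ε) st).seen = st.seen ∪ T.toFinset := by
  induction T generalizing st with
  | nil => simp
  | cons a T ih =>
    rw [List.foldl_cons, ih, seen_step]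
    ext y
    simp only [mem_union, mem_insert, List.mem_toFinset, List.mem_cons]
    tauto

lemma mem_seen_process (S : List (Fin n → Bool)) (x : Fin n → Bool) :
    x ∈ (process Γ ε S).seen ↔ x ∈ S := by
  rw [process, seen_foldl]
  simp

lemma card_seen_process (S : List (Fin n → Bool)) :
    (process Γ ε S).seen.card ≤ S.length := by
  rw [process, seen_foldl]
  simpa using S.toFinset_card_le

lemma asg_step_of_ne (st : St n d m) {x y : Fin n → Bool} (hxy : y ≠ x) :
    (step Γ ε st x).asg y = st.asg y := by
  rw [step]
  split
  · rfl
  · exact Function.update_of_ne hxy _ _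

lemma asg_foldl_of_seen (T : List (Fin n → Bool)) (st : St n d m) {x : Fin n → Bool}
    (hx : x ∈ st.seen) : (T.foldl (step Γ ε) st).asg x = st.asg x := by
  induction T generalizing st with
  | nil => rfl
  | cons a T ih =>
    rw [List.foldl_cons]
    rcases eq_or_ne x a with rfl | hne
    · rw [ih _ (by rw [seen_step]; exact mem_insert_self _ _)]
      rw [step, if_pos hx]
    · rw [ih _ (by rw [seen_step]; exact mem_insert_of_mem hx), asg_step_of_ne _ _ _ hne]

lemma asg_foldl_unseen (S : List (Fin n → Bool)) (st : St n d m) {x : Fin n → Bool}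
    (hx : x ∉ S) : (S.foldl (step Γ ε) st).asg x = st.asg x := by
  induction S generalizing st with
  | nil => rfl
  | cons a T ih =>
    rw [List.foldl_cons, ih _ (fun hm => hx (List.mem_cons_of_mem _ hm)),
      asg_step_of_ne _ _ _ (fun hh : x = a => hx (hh ▸ List.mem_cons_self))]

lemma asg_unseen (S : List (Fin n → Bool)) {x : Fin n → Bool} (hx : x ∉ S) :
    (process Γ ε S).asg x = ∅ :=
  asg_foldl_unseen Γ ε S _ hx

/-- the set of labels kept by `x` arriving in state `st` -/
noncomputable def kept (st : St n d m) (x : Fin n → Bool) : Finset (Fin d → Bool) :=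
  univ.filter fun i => load Γ st (Γ x i) < tau Γ ε st x

lemma step_of_not_mem {st : St n d m} {x : Fin n → Bool} (hx : x ∉ st.seen) :
    step Γ ε st x = ⟨insert x st.seen, Function.update st.asg x (kept Γ ε st x)⟩ := by
  rw [step, if_neg hx]; rfl

lemma asg_step_self {st : St n d m} {x : Fin n → Bool} (hx : x ∉ st.seen) :
    (step Γ ε st x).asg x = kept Γ ε st x := by
  rw [step_of_not_mem Γ ε hx]
  exact Function.update_self _ _ _

lemma contribs_step {st : St n d m} {x : Fin n → Bool} (hx : x ∉ st.seen)
    (p : Fin m → Bool) :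
    contribs Γ (step Γ ε st x) p =
      if ∃ i ∈ kept Γ ε st x, Γ x i = p then insert x (contribs Γ st p)
      else contribs Γ st p := by
  rw [contribs, step_of_not_mem Γ ε hx]
  simp only
  rw [filter_insert]
  have hfil : (st.seen.filter fun y =>
      ∃ i ∈ Function.update st.asg x (kept Γ ε st x) y, Γ y i = p) = contribs Γ st p := by
    apply filter_congr
    intro y hy
    rw [Function.update_of_ne (fun h : y = x => hx (h ▸ hy))]
  rw [hfil]
  congr 1
  rw [Function.update_self]

lemma x_not_mem_contribs {st : St n d m} {x : Fin n → Bool} (hx : x ∉ st.seen)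
    (p : Fin m → Bool) : x ∉ contribs Γ st p := fun h => hx (mem_of_mem_filter _ h)

lemma load_step_mono (st : St n d m) (x : Fin n → Bool) (p : Fin m → Bool) :
    load Γ st p ≤ load Γ (step Γ ε st x) p := by
  by_cases hx : x ∈ st.seen
  · rw [step, if_pos hx]
  · rw [load, load, contribs_step Γ ε hx]
    split
    · exact card_le_card (subset_insert _ _)
    · exact le_rfl

lemma load_foldl_mono (T : List (Fin n → Bool)) (st : St n d m) (p : Fin m → Bool) :
    load Γ st p ≤ load Γ (T.foldl (step Γ ε) st) p := by
  induction T generalizing st with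
  | nil => exact le_rfl
  | cons a T ih => exact le_trans (load_step_mono Γ ε st a p) (ih _)

lemma Lam_step_mono (st : St n d m) (x : Fin n → Bool) (t : ℕ) :
    Lam Γ st t ⊆ Lam Γ (step Γ ε st x) t := by
  intro p hp
  simp only [Lam, mem_filter, mem_univ, true_and] at *
  exact le_trans hp (load_step_mono Γ ε st x p)

lemma card_kept {st : St n d m} (x : Fin n → Bool) :
    (kept Γ ε st x).card = 2 ^ d - edges Γ x (Lam Γ st (tau Γ ε st x)) := by
  have h2 : edges Γ x (Lam Γ st (tau Γ ε st x)) =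
      (univ.filter fun i => ¬ load Γ st (Γ x i) < tau Γ ε st x).card := by
    rw [edges]
    congr 1
    apply filter_congr
    intro i _
    simp [Lam, not_lt]
  rw [kept, h2, eq_tsub_iff_add_eq_of_le, card_filter_add_card_filter_not]
  · simp
  · rw [← h2]
    calc edges Γ x (Lam Γ st (tau Γ ε st x)) ≤ (univ : Finset (Fin d → Bool)).card :=
          card_le_card (filter_subset _ _)
      _ = 2 ^ d := by simp

lemma card_kept_ge {st : St n d m} (x : Fin n → Bool) (hε : 0 ≤ ε) :
    (1 - 4 * ε) * 2 ^ d ≤ ((kept Γ ε st x).card : ℝ) := by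
  rw [card_kept]
  have h1 := tau_spec Γ ε st x hε
  have h2 : edges Γ x (Lam Γ st (tau Γ ε st x)) ≤ 2 ^ d := by
    calc edges Γ x (Lam Γ st (tau Γ ε st x)) ≤ (univ : Finset (Fin d → Bool)).card :=
          card_le_card (filter_subset _ _)
      _ = 2 ^ d := by simp
  rw [Nat.cast_sub h2]
  push_cast
  nlinarith [h1]

/-- gaining a contributor requires low load -/
lemma load_lt_tau_of_gained {st : St n d m} {x : Fin n → Bool} {p : Fin m → Bool}
    (h : ∃ i ∈ kept Γ ε st x, Γ x i = p) : load Γ st p < tau Γ ε st x := by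
  obtain ⟨i, hi, hip⟩ := h
  rw [kept, mem_filter] at hi
  exact hip ▸ hi.2

/-- "pushers": seen vertices with many edges into the level-`s` loaded set -/
noncomputable def Apush (st : St n d m) (s : ℕ) : Finset (Fin n → Bool) :=
  st.seen.filter fun x => 4 * ε * 2 ^ d < (edges Γ x (Lam Γ st s) : ℝ)

lemma Apush_step_mono (st : St n d m) (x : Fin n → Bool) (s : ℕ) :
    Apush Γ ε st s ⊆ Apush Γ ε (step Γ ε st x) s := by
  intro y hy
  simp only [Apush, mem_filter] at *
  constructor
  · have : st.seen ⊆ (step Γ ε st x).seen := by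
      rw [seen_step]; exact subset_insert _ _
    exact this hy.1
  · refine lt_of_lt_of_le hy.2 ?_
    exact_mod_cast edges_mono Γ y (Lam_step_mono Γ ε st x s)

/-- Main invariant: the load of `p` exceeds `s` only by contributors that are
`s`-pushers. -/
lemma inv_process (hε : 0 ≤ ε) (S : List (Fin n → Bool)) (p : Fin m → Bool) (s : ℕ) :
    load Γ (process Γ ε S) p ≤
      s + ((contribs Γ (process Γ ε S) p) ∩ Apush Γ ε (process Γ ε S) s).card := by
  induction S using List.reverseRecOn with
  | nil =>
    simp [process, load, contribs]
  | append_singleton S x ih =>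
    rw [process_append]
    simp only [List.foldl_cons, List.foldl_nil]
    set st := process Γ ε S with hst
    by_cases hx : x ∈ st.seen
    · rw [step, if_pos hx]; exact ih
    · have hcon := contribs_step Γ ε hx p
      by_cases hg : ∃ i ∈ kept Γ ε st x, Γ x i = p
      · -- p gains x as a contributor
        rw [if_pos hg] at hcon
        have hload : load Γ (step Γ ε st x) p = load Γ st p + 1 := by
          rw [load, hcon, card_insert_of_notMem (x_not_mem_contribs Γ hx p), load]
        rcases le_or_gt (load Γ st p + 1) s with hs | hs
        · rw [hload]; exact le_add_right hs
        · -- s ≤ load st p < tau st x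
          have hslt : s < tau Γ ε st x :=
            lt_of_le_of_lt (by omega) (load_lt_tau_of_gained Γ ε hg)
          have hxA : x ∈ Apush Γ ε (step Γ ε st x) s := by
            simp only [Apush, mem_filter]
            refine ⟨by rw [seen_step]; exact mem_insert_self _ _, ?_⟩
            refine lt_of_lt_of_le (tau_min Γ ε hε hslt) ?_
            exact_mod_cast edges_mono Γ x (Lam_step_mono Γ ε st x s)
          have hsub : insert x ((contribs Γ st p) ∩ Apush Γ ε st s) ⊆
              (contribs Γ (step Γ ε st x) p) ∩ Apush Γ ε (step Γ ε st x) s := by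
            intro y hy
            rcases mem_insert.1 hy with rfl | hy
            · exact mem_inter.2 ⟨by rw [hcon]; exact mem_insert_self _ _, hxA⟩
            · rcases mem_inter.1 hy with ⟨h1, h2⟩
              exact mem_inter.2 ⟨by rw [hcon]; exact mem_insert_of_mem h1,
                Apush_step_mono Γ ε st x s h2⟩
          have hcard : ((contribs Γ st p) ∩ Apush Γ ε st s).card + 1 ≤
              ((contribs Γ (step Γ ε st x) p) ∩ Apush Γ ε (step Γ ε st x) s).card := by
            have hxnot : x ∉ (contribs Γ st p) ∩ Apush Γ ε st s :=
              fun h => (x_not_mem_contribs Γ hx p) (mem_inter.1 h).1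
            calc ((contribs Γ st p) ∩ Apush Γ ε st s).card + 1
                = (insert x ((contribs Γ st p) ∩ Apush Γ ε st s)).card :=
                  (card_insert_of_notMem hxnot).symm
              _ ≤ _ := card_le_card hsub
          rw [hload]
          have := ih
          omega
      · rw [if_neg hg] at hcon
        have hload : load Γ (step Γ ε st x) p = load Γ st p := by rw [load, hcon, load]
        rw [hload]
        refine le_trans ih (Nat.add_le_add_left (card_le_card ?_) s)
        intro y hy
        rcases mem_inter.1 hy with ⟨h1, h2⟩
        exact mem_inter.2 ⟨by rw [hcon]; exact h1, Apush_step_mono Γ ε st x s h2⟩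

/-- each member of `Apush s` has more than `4ε2^d` edges into `Lam s` -/
lemma apush_edges {st : St n d m} {s : ℕ} {x : Fin n → Bool} (hx : x ∈ Apush Γ ε st s) :
    4 * ε * 2 ^ d < (edges Γ x (Lam Γ st s) : ℝ) := (mem_filter.1 hx).2

/-- the vertices of `Lam t` to which `x` contributes are at most `edges x (Lam t)` -/
lemma contribs_to_le_edges (st : St n d m) (x : Fin n → Bool) (t : ℕ) :
    ((Lam Γ st t).filter fun p => x ∈ contribs Γ st p).card ≤ edges Γ x (Lam Γ st t) := by
  rw [edges]
  apply card_le_card_of_surjOn (fun i => Γ x i)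
  intro p hp
  simp only [coe_filter, Set.mem_setOf_eq] at hp
  obtain ⟨hpl, hpc⟩ := hp
  simp only [contribs, mem_filter] at hpc
  obtain ⟨-, i, hi, hip⟩ := hpc
  refine ⟨i, ?_, hip⟩
  simp only [coe_filter, Set.mem_setOf_eq, mem_univ, true_and]
  rw [hip]; exact hpl

/-- double counting -/
lemma pair_count (st : St n d m) (s t : ℕ) :
    ∑ p ∈ Lam Γ st t, ((contribs Γ st p) ∩ Apush Γ ε st s).card
      ≤ ∑ x ∈ Apush Γ ε st s, edges Γ x (Lam Γ st t) := by
  have h1 : ∀ p, ((contribs Γ st p) ∩ Apush Γ ε st s).card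
      = ∑ x ∈ Apush Γ ε st s, if x ∈ contribs Γ st p then 1 else 0 := by
    intro p
    rw [inter_comm, ← Finset.filter_mem_eq_inter, Finset.card_filter]
  calc ∑ p ∈ Lam Γ st t, ((contribs Γ st p) ∩ Apush Γ ε st s).card
      = ∑ p ∈ Lam Γ st t, ∑ x ∈ Apush Γ ε st s, (if x ∈ contribs Γ st p then 1 else 0) :=
        Finset.sum_congr rfl fun p _ => h1 p
    _ = ∑ x ∈ Apush Γ ε st s, ∑ p ∈ Lam Γ st t, (if x ∈ contribs Γ st p then 1 else 0) :=
        Finset.sum_comm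
    _ = ∑ x ∈ Apush Γ ε st s, ((Lam Γ st t).filter fun p => x ∈ contribs Γ st p).card :=
        Finset.sum_congr rfl fun x _ => (Finset.card_filter _ _).symm
    _ ≤ ∑ x ∈ Apush Γ ε st s, edges Γ x (Lam Γ st t) :=
        Finset.sum_le_sum fun x _ => contribs_to_le_edges Γ st x t

section Chain

variable {kmax e : ℕ}
variable (hcnt : ∀ (A : Finset (Fin n → Bool)) (T : Finset (Fin m → Bool)),
  A.Nonempty → A.card ≤ 2 ^ kmax →
  (∑ x ∈ A, (edges Γ x T : ℝ)) ≤ ε * A.card * 2 ^ d + T.card * 2 ^ e)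

include hcnt

/-- level inequality -/
lemma level_ineq (hε : 0 ≤ ε) {S : List (Fin n → Bool)} (hlen : S.length ≤ 2 ^ kmax)
    {s t : ℕ} (hst : s < t) :
    ((t - s : ℕ) : ℝ) * ((Lam Γ (process Γ ε S) t).card : ℝ) ≤
      ε * ((Apush Γ ε (process Γ ε S) s).card : ℝ) * 2 ^ d
        + ((Lam Γ (process Γ ε S) t).card : ℝ) * 2 ^ e := by
  set st := process Γ ε S with hstdef
  by_cases hA : (Apush Γ ε st s).Nonempty
  · have hAcard : (Apush Γ ε st s).card ≤ 2 ^ kmax := by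
      calc (Apush Γ ε st s).card ≤ st.seen.card := card_le_card (filter_subset _ _)
        _ ≤ S.length := card_seen_process Γ ε S
        _ ≤ 2 ^ kmax := hlen
    have h1n : (t - s) * (Lam Γ st t).card ≤
        ∑ p ∈ Lam Γ st t, ((contribs Γ st p) ∩ Apush Γ ε st s).card := by
      rw [mul_comm, ← smul_eq_mul, ← Finset.sum_const]
      apply Finset.sum_le_sum
      intro p hp
      have hload : t ≤ load Γ st p := (mem_filter.1 hp).2
      have hinv := inv_process Γ ε hε S p s
      rw [← hstdef] at hinv
      omega
    have h2n := pair_count Γ ε st s t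
    have h3 : (∑ x ∈ Apush Γ ε st s, (edges Γ x (Lam Γ st t) : ℝ))
        ≤ ε * ((Apush Γ ε st s).card : ℝ) * 2 ^ d + ((Lam Γ st t).card : ℝ) * 2 ^ e :=
      hcnt _ _ hA hAcard
    calc ((t - s : ℕ) : ℝ) * ((Lam Γ st t).card : ℝ)
        = (((t - s) * (Lam Γ st t).card : ℕ) : ℝ) := by push_cast; ring
      _ ≤ ((∑ p ∈ Lam Γ st t, ((contribs Γ st p) ∩ Apush Γ ε st s).card : ℕ) : ℝ) := by
          exact_mod_cast h1n
      _ ≤ ((∑ x ∈ Apush Γ ε st s, edges Γ x (Lam Γ st t) : ℕ) : ℝ) := by exact_mod_cast h2n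
      _ = ∑ x ∈ Apush Γ ε st s, (edges Γ x (Lam Γ st t) : ℝ) := by push_cast; ring
      _ ≤ _ := h3
  · -- no pushers: Lam t is empty
    have hLam : Lam Γ st t = ∅ := by
      apply eq_empty_of_forall_notMem
      intro p hp
      simp only [Lam, mem_filter] at hp
      have := inv_process Γ ε hε S p s
      rw [← hstdef] at this
      rw [not_nonempty_iff_eq_empty.1 hA, inter_empty, card_empty] at this
      omega
    rw [hLam]
    simp only [card_empty, Nat.cast_zero, mul_zero, zero_mul]
    have : (0:ℝ) ≤ ε * ((Apush Γ ε st s).card : ℝ) * 2 ^ d := by positivity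
    linarith

/-- pushers are few -/
lemma apush_card (hε : 0 ≤ ε) {S : List (Fin n → Bool)} (hlen : S.length ≤ 2 ^ kmax)
    (s : ℕ) :
    3 * ε * 2 ^ d * ((Apush Γ ε (process Γ ε S) s).card : ℝ) ≤
      ((Lam Γ (process Γ ε S) s).card : ℝ) * 2 ^ e := by
  set st := process Γ ε S with hstdef
  by_cases hA : (Apush Γ ε st s).Nonempty
  · have hAcard : (Apush Γ ε st s).card ≤ 2 ^ kmax := by
      calc (Apush Γ ε st s).card ≤ st.seen.card := card_le_card (filter_subset _ _)
        _ ≤ S.length := card_seen_process Γ ε S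
        _ ≤ 2 ^ kmax := hlen
    have h1 : 4 * ε * 2 ^ d * ((Apush Γ ε st s).card : ℝ)
        ≤ ∑ x ∈ Apush Γ ε st s, (edges Γ x (Lam Γ st s) : ℝ) := by
      rw [mul_comm, ← nsmul_eq_mul, ← Finset.sum_const]
      exact Finset.sum_le_sum fun x hx => le_of_lt (apush_edges Γ ε hx)
    have h2 := hcnt _ (Lam Γ st s) hA hAcard
    linarith
  · rw [not_nonempty_iff_eq_empty.1 hA]
    simp only [card_empty, Nat.cast_zero, mul_zero]
    positivity

/-- geometric decay of the level sets -/
lemma lam_decay (hε : 0 ≤ ε) {S : List (Fin n → Bool)} (hlen : S.length ≤ 2 ^ kmax)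
    (j : ℕ) :
    (3:ℝ) ^ j * (((Lam Γ (process Γ ε S) (2 * 2 ^ e * (1 + j))).card : ℝ) * 2 ^ e) ≤
      ε * 2 ^ kmax * 2 ^ d := by
  induction j with
  | zero =>
    have h := level_ineq Γ ε hcnt hε hlen (s := 0) (t := 2 * 2 ^ e * (1 + 0))
      (by positivity)
    have hts : ((2 * 2 ^ e * (1 + 0) - 0 : ℕ) : ℝ) = 2 * 2 ^ e := by
      push_cast; ring_nf; norm_num
    rw [hts] at h
    have hApB : ((Apush Γ ε (process Γ ε S) 0).card : ℝ) ≤ 2 ^ kmax := by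
      have : (Apush Γ ε (process Γ ε S) 0).card ≤ 2 ^ kmax := by
        calc (Apush Γ ε (process Γ ε S) 0).card
            ≤ (process Γ ε S).seen.card := card_le_card (filter_subset _ _)
          _ ≤ S.length := card_seen_process Γ ε S
          _ ≤ 2 ^ kmax := hlen
      exact_mod_cast this
    have hεp : 0 ≤ ε * 2 ^ d := by positivity
    simp only [pow_zero, one_mul]
    nlinarith [h, mul_le_mul_of_nonneg_left hApB hεp]
  | succ j ih =>
    set s := 2 * 2 ^ e * (1 + j) with hs
    set t := 2 * 2 ^ e * (1 + (j + 1)) with ht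
    have hts0 : t = s + 2 * 2 ^ e := by rw [hs, ht]; ring
    have h2e : 0 < 2 ^ e := by positivity
    have hst : s < t := by omega
    have h := level_ineq Γ ε hcnt hε hlen (s := s) (t := t) hst
    have hts : ((t - s : ℕ) : ℝ) = 2 * 2 ^ e := by
      have : t - s = 2 * 2 ^ e := by omega
      rw [this]; push_cast; ring
    rw [hts] at h
    have hap := apush_card Γ ε hcnt hε hlen s
    -- from h : 2*2^e*|Λt| ≤ ε|A_s|2^d + |Λt|*2^e  get  |Λt|*2^e ≤ ε|A_s|2^d
    -- with hap : 3ε2^d|A_s| ≤ |Λ_s|*2^e  get  3*(|Λt|*2^e) ≤ |Λ_s|*2^e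
    have key : 3 * (((Lam Γ (process Γ ε S) t).card : ℝ) * 2 ^ e) ≤
        ((Lam Γ (process Γ ε S) s).card : ℝ) * 2 ^ e := by
      have h2e : (0:ℝ) < 2 ^ e := by positivity
      nlinarith [h, hap, (by positivity : (0:ℝ) ≤ ((Lam Γ (process Γ ε S) t).card : ℝ))]
    calc (3:ℝ) ^ (j+1) * (((Lam Γ (process Γ ε S) t).card : ℝ) * 2 ^ e)
        = (3:ℝ) ^ j * (3 * (((Lam Γ (process Γ ε S) t).card : ℝ) * 2 ^ e)) := by ring
      _ ≤ (3:ℝ) ^ j * (((Lam Γ (process Γ ε S) s).card : ℝ) * 2 ^ e) := by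
          exact mul_le_mul_of_nonneg_left key (by positivity : (0:ℝ) ≤ 3 ^ j)
      _ ≤ ε * 2 ^ kmax * 2 ^ d := ih

/-- the set of saturated vertices is small -/
lemma lam_r_small (hε : 0 ≤ ε) (hk1 : 1 ≤ kmax) {S : List (Fin n → Bool)}
    (hlen : S.length ≤ 2 ^ kmax) :
    ((Lam Γ (process Γ ε S) (2 * kmax * 2 ^ e)).card : ℝ) * 2 ^ e ≤ 3 * ε * 2 ^ d := by
  have h := lam_decay Γ ε hcnt hε hlen (kmax - 1)
  have hidx : 2 * 2 ^ e * (1 + (kmax - 1)) = 2 * kmax * 2 ^ e := by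
    have : 1 + (kmax - 1) = kmax := by omega
    rw [this]; ring
  rw [hidx] at h
  have h23 : (2:ℝ) ^ kmax ≤ 3 ^ kmax := by
    apply pow_le_pow_left₀ (by norm_num) (by norm_num)
  have h3pos : (0:ℝ) < 3 ^ (kmax - 1) := by positivity
  have h3k : (3:ℝ) ^ kmax = 3 * 3 ^ (kmax - 1) := by
    rw [← pow_succ']
    congr 1
    omega
  have h2d : (0:ℝ) ≤ 2 ^ d := by positivity
  have hb : ε * 2 ^ kmax * 2 ^ d ≤ 3 ^ (kmax - 1) * (3 * ε * 2 ^ d) := by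
    have h1 : ε * (2:ℝ) ^ kmax ≤ ε * 3 ^ kmax := mul_le_mul_of_nonneg_left h23 hε
    calc ε * (2:ℝ) ^ kmax * 2 ^ d ≤ ε * 3 ^ kmax * 2 ^ d :=
          mul_le_mul_of_nonneg_right h1 h2d
      _ = 3 ^ (kmax - 1) * (3 * ε * 2 ^ d) := by rw [h3k]; ring
  exact le_of_mul_le_mul_left (le_trans h hb) h3pos

/-- the threshold never exceeds `2 kmax 2^e` -/
lemma tau_le_r (hε : 0 ≤ ε) (hk1 : 1 ≤ kmax) {S : List (Fin n → Bool)}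
    (hlen : S.length ≤ 2 ^ kmax) (x : Fin n → Bool) :
    tau Γ ε (process Γ ε S) x ≤ 2 * kmax * 2 ^ e := by
  apply tau_le Γ ε hε
  have hone : ({x} : Finset (Fin n → Bool)).card ≤ 2 ^ kmax := by
    rw [card_singleton]
    exact Nat.one_le_two_pow
  have hsingle := hcnt {x} (Lam Γ (process Γ ε S) (2 * kmax * 2 ^ e))
    (singleton_nonempty x) hone
  rw [Finset.sum_singleton, card_singleton] at hsingle
  have hsmall := lam_r_small Γ ε hcnt hε hk1 hlen
  push_cast at hsingle
  linarith

/-- loads never exceed `2 kmax 2^e` -/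
lemma load_le_r (hε : 0 ≤ ε) (hk1 : 1 ≤ kmax) (S : List (Fin n → Bool))
    (hlen : S.length ≤ 2 ^ kmax) (p : Fin m → Bool) :
    load Γ (process Γ ε S) p ≤ 2 * kmax * 2 ^ e := by
  induction S using List.reverseRecOn with
  | nil => simp [process, load, contribs]
  | append_singleton S x ih =>
    have hlenS : S.length ≤ 2 ^ kmax := by
      rw [List.length_append, List.length_singleton] at hlen; omega
    rw [process_append]
    simp only [List.foldl_cons, List.foldl_nil]
    set st := process Γ ε S with hstdef
    by_cases hx : x ∈ st.seen
    · rw [step, if_pos hx]; exact ih hlenS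
    · rw [load, contribs_step Γ ε hx]
      split
      · rw [card_insert_of_notMem (x_not_mem_contribs Γ hx p)]
        have h1 : load Γ st p < tau Γ ε st x := load_lt_tau_of_gained Γ ε ‹_›
        have h2 : tau Γ ε st x ≤ 2 * kmax * 2 ^ e := tau_le_r Γ ε hcnt hε hk1 hlenS x
        rw [load] at h1
        omega
      · exact ih hlenS

end Chain


lemma asg_card_ge (hε : 0 ≤ ε) (S : List (Fin n → Bool)) {x : Fin n → Bool} (hx : x ∈ S) :
    (1 - 4 * ε) * 2 ^ d ≤ (((process Γ ε S).asg x).card : ℝ) := by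
  have main : ∀ (T : List (Fin n → Bool)) (st : St n d m),
      (∀ y ∈ st.seen, (1 - 4 * ε) * 2 ^ d ≤ ((st.asg y).card : ℝ)) →
      ∀ y ∈ (T.foldl (step Γ ε) st).seen,
        (1 - 4 * ε) * 2 ^ d ≤ (((T.foldl (step Γ ε) st).asg y).card : ℝ) := by
    intro T
    induction T with
    | nil => intro st h y hy; exact h y hy
    | cons a T ih =>
      intro st h y hy
      rw [List.foldl_cons] at hy ⊢
      refine ih (step Γ ε st a) ?_ y hy
      intro z hz
      rw [seen_step] at hz
      by_cases hza : z = a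
      · subst hza
        by_cases ha : z ∈ st.seen
        · rw [step, if_pos ha]; exact h z ha
        · rw [asg_step_self Γ ε ha]; exact card_kept_ge Γ ε z hε
      · rw [asg_step_of_ne Γ ε st hza]
        exact h z ((mem_insert.1 hz).resolve_left hza)
  exact main S _ (by simp) x ((mem_seen_process Γ ε S x).2 hx)

lemma condenser_count {n d m kmax e : ℕ} {ε : ℝ} (hε : 0 < ε)
    {C : (Fin n → Bool) → (Fin d → Bool) → (Fin m → Bool)}
    (hcond : ∀ k : ℝ, 0 ≤ k → k ≤ (kmax : ℝ) →
      IsCondenser C k ε (k + (d : ℝ) - (e : ℝ)))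
    {A : Finset (Fin n → Bool)} (hA : A.Nonempty) (hAc : A.card ≤ 2 ^ kmax)
    (T : Finset (Fin m → Bool)) :
    (∑ x ∈ A, (edges C x T : ℝ)) ≤ ε * A.card * 2 ^ d + T.card * 2 ^ e := by
  classical
  obtain ⟨a, ha_def⟩ : ∃ a : ℝ, a = (A.card : ℝ) := ⟨_, rfl⟩
  rw [← ha_def]
  have ha0 : 0 < a := by rw [ha_def]; exact_mod_cast hA.card_pos
  have hane : a ≠ 0 := ne_of_gt ha0
  have ha1 : 1 ≤ a := by rw [ha_def]; exact_mod_cast hA.card_pos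
  set P : (Fin n → Bool) → ℝ := fun x => if x ∈ A then a⁻¹ else 0 with hP_def
  have hPdist : IsDist P := by
    constructor
    · intro x; simp only [hP_def]; split <;> positivity
    · simp only [hP_def]
      rw [Finset.sum_ite_mem, Finset.univ_inter, Finset.sum_const, nsmul_eq_mul, ← ha_def]
      exact mul_inv_cancel₀ hane
  set k : ℝ := Real.logb 2 a with hk_def
  have h2k : (2 : ℝ) ^ (-k) = a⁻¹ := by
    rw [Real.rpow_neg (by norm_num), Real.rpow_logb two_pos (by norm_num) ha0]
  have hk0 : 0 ≤ k := Real.logb_nonneg one_lt_two ha1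
  have hkm : k ≤ (kmax : ℝ) := by
    rw [hk_def, Real.logb_le_iff_le_rpow one_lt_two ha0]
    rw [Real.rpow_natCast, ha_def]
    exact_mod_cast hAc
  have hPent : MinEntropyGe P k := by
    intro x
    rw [h2k]
    simp only [hP_def]
    split
    · exact le_rfl
    · positivity
  obtain ⟨Q, hQdist, hQent, hclose⟩ := hcond k hk0 hkm P hPdist hPent
  -- compute the out-distribution mass on T
  have hout : ∑ y ∈ T, outDist C P y = ∑ x ∈ A, a⁻¹ / 2 ^ d * (edges C x T : ℝ) := by
    simp only [outDist]
    rw [Finset.sum_comm]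
    have hx : ∀ x : Fin n → Bool,
        ∑ y ∈ T, ∑ ρ : Fin d → Bool, (if C x ρ = y then P x / 2 ^ d else 0)
          = P x / 2 ^ d * (edges C x T : ℝ) := by
      intro x
      rw [Finset.sum_comm]
      have h1 : ∀ ρ : Fin d → Bool,
          ∑ y ∈ T, (if C x ρ = y then P x / 2 ^ d else 0)
            = if C x ρ ∈ T then P x / 2 ^ d else 0 := by
        intro ρ
        exact Finset.sum_ite_eq T (C x ρ) (fun _ => P x / 2 ^ d)
      rw [Finset.sum_congr rfl fun ρ _ => h1 ρ, ← Finset.sum_filter, Finset.sum_const,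
        edges, nsmul_eq_mul, mul_comm]
    rw [Finset.sum_congr rfl fun x _ => hx x]
    have h2 : ∀ x : Fin n → Bool,
        P x / 2 ^ d * (edges C x T : ℝ)
          = if x ∈ A then a⁻¹ / 2 ^ d * (edges C x T : ℝ) else 0 := by
      intro x
      simp only [hP_def]
      split <;> simp
    rw [Finset.sum_congr rfl fun x _ => h2 x, Finset.sum_ite_mem, Finset.univ_inter]
  -- mass of Q on T
  have hQT : ∑ y ∈ T, Q y ≤ (T.card : ℝ) * (a⁻¹ * (2 ^ e / 2 ^ d)) := by
    have hpt : ∀ y : Fin m → Bool, Q y ≤ a⁻¹ * (2 ^ e / 2 ^ d) := by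
      intro y
      have := hQent y
      have heq : (2 : ℝ) ^ (-(k + (d : ℝ) - (e : ℝ))) = a⁻¹ * (2 ^ e / 2 ^ d) := by
        have : -(k + (d : ℝ) - (e : ℝ)) = (-k) + ((e : ℝ) - (d : ℝ)) := by ring
        rw [this, Real.rpow_add two_pos, h2k, Real.rpow_sub two_pos,
          Real.rpow_natCast, Real.rpow_natCast]
      rw [heq] at this
      exact this
    calc ∑ y ∈ T, Q y ≤ ∑ y ∈ T, (a⁻¹ * (2 ^ e / 2 ^ d)) := Finset.sum_le_sum fun y _ => hpt y
      _ = (T.card : ℝ) * (a⁻¹ * (2 ^ e / 2 ^ d)) := by rw [Finset.sum_const, nsmul_eq_mul]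
  -- closeness
  have hcl : ∑ y ∈ T, outDist C P y ≤ ε + ∑ y ∈ T, Q y :=
    by linarith [abs_le.1 (hclose T) |>.2]
  rw [hout] at hcl
  have hsum : ∑ x ∈ A, a⁻¹ / 2 ^ d * (edges C x T : ℝ)
      = a⁻¹ / 2 ^ d * ∑ x ∈ A, (edges C x T : ℝ) := by rw [Finset.mul_sum]
  rw [hsum] at hcl
  have hfin : a⁻¹ / 2 ^ d * ∑ x ∈ A, (edges C x T : ℝ)
      ≤ ε + (T.card : ℝ) * (a⁻¹ * (2 ^ e / 2 ^ d)) := le_trans hcl (by linarith)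
  have hD : (0:ℝ) < 2 ^ d := by positivity
  have hdne : ((2:ℝ) ^ d) ≠ 0 := ne_of_gt hD
  have hS : ∑ x ∈ A, (edges C x T : ℝ)
      = a * 2 ^ d * (a⁻¹ / 2 ^ d * ∑ x ∈ A, (edges C x T : ℝ)) := by
    field_simp
  rw [hS]
  calc (a * 2 ^ d) * (a⁻¹ / 2 ^ d * ∑ x ∈ A, (edges C x T : ℝ))
      ≤ (a * 2 ^ d) * (ε + (T.card : ℝ) * (a⁻¹ * (2 ^ e / 2 ^ d))) :=
        mul_le_mul_of_nonneg_left hfin (by positivity)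
    _ = ε * a * 2 ^ d + (T.card : ℝ) * 2 ^ e := by
        rw [div_eq_mul_inv]
        have h1 := mul_inv_cancel₀ hane
        have h2 := mul_inv_cancel₀ hdne
        linear_combination ((T.card : ℝ) * 2 ^ e * (2 ^ d * (2 ^ d)⁻¹)) * h1 + (T.card : ℝ) * 2 ^ e * h2

end OMC

/-- **Condenser ⇒ online matching (with sharing).**
If `C : {0,1}^n × {0,1}^d → {0,1}^m` is a `k →_ε (k+d−e)` condenser for every real
`0 ≤ k ≤ k_max` (where `1 ≤ k_max ≤ n` and `ε > 0`), then the graph corresponding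
to `C` admits `((1−4ε)·2^d, 2·k_max·2^e)` online matching up to size `2^{k_max}`. -/
theorem onlineMatching_of_condenser
    (n d m kmax e : ℕ) (hkmax1 : 1 ≤ kmax) (hkmax : kmax ≤ n) (ε : ℝ) (hε : 0 < ε)
    (C : (Fin n → Bool) → (Fin d → Bool) → (Fin m → Bool))
    (hcond : ∀ k : ℝ, 0 ≤ k → k ≤ (kmax : ℝ) →
      IsCondenser C k ε (k + (d : ℝ) - (e : ℝ))) :
    OnlineMatching (fun x (ρ : Fin d → Bool) => C x ρ)
      ((1 - 4 * ε) * (2 : ℝ) ^ d) (2 * kmax * 2 ^ e) (2 ^ kmax) := by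
  classical
  have hε0 : 0 ≤ ε := le_of_lt hε
  have hcnt : ∀ (A : Finset (Fin n → Bool)) (T : Finset (Fin m → Bool)),
      A.Nonempty → A.card ≤ 2 ^ kmax →
      (∑ x ∈ A, (OMC.edges C x T : ℝ)) ≤ ε * A.card * 2 ^ d + T.card * 2 ^ e :=
    fun A T hA hAc => OMC.condenser_count hε hcond hA hAc T
  refine ⟨fun S x => (OMC.process C ε S).asg x, ?_, ?_⟩
  · intro S hlen x
    constructor
    · intro hx
      exact OMC.asg_unseen C ε S hx
    · intro hx
      refine ⟨OMC.asg_card_ge C ε hε0 S hx, ?_⟩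
      intro S' hlen' hpre
      obtain ⟨T, rfl⟩ := hpre
      show (OMC.process C ε S).asg x = (OMC.process C ε (S ++ T)).asg x
      rw [OMC.process_append]
      exact (OMC.asg_foldl_of_seen C ε T _ ((OMC.mem_seen_process C ε S x).2 hx)).symm
  · intro S hlen p
    have hset : {x : Fin n → Bool | x ∈ S ∧
        ∃ i ∈ (OMC.process C ε S).asg x, (fun x (ρ : Fin d → Bool) => C x ρ) x i = p}
        = ↑(OMC.contribs C (OMC.process C ε S) p) := by
      ext x
      simp only [Set.mem_setOf_eq, Finset.coe_filter, OMC.contribs, Finset.mem_coe,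
        Finset.mem_filter, OMC.mem_seen_process]
    rw [hset, Set.ncard_coe_finset]
    exact OMC.load_le_r C ε hcnt hε0 hkmax1 S hlen p
end

section
/- There exists a bipartite graph with left degree 2 that admits (1,1) offline matching up to size 2 but does not admit (1,1) online matching up to size 2. Concretely, the graph Γ : L × [2] → R with L = {x₁, x₂, x₃}, R = {y₁, y₂}, Γ(x₁,1) = Γ(x₁,2) = y₁, Γ(x₂,1) = y₁, Γ(x₂,2) = y₂, and Γ(x₃,1) = Γ(x₃,2) = y₂ has both properties. -/
open Finset

/-- The graph admits `(ℓ, r)` offline matching up to size `K`: for every set `S` of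
at most `K` left nodes there are sets `A x ⊆ [D]` of at least `ℓ` edge labels for
`x ∈ S` such that every right node `p` is the endpoint of an assigned edge of at
most `r` distinct elements of `S`. -/
def OfflineMatching {L R ι : Type*} (Γ : L → ι → R) (ℓ : ℝ) (r K : ℕ) : Prop :=
  ∀ S : Finset L, S.card ≤ K →
    ∃ A : L → Finset ι,
      (∀ x ∈ S, ℓ ≤ ((A x).card : ℝ)) ∧
      (∀ p : R, {x : L | x ∈ S ∧ ∃ i ∈ A x, Γ x i = p}.ncard ≤ r)

/-- The concrete graph with `L = {x₁, x₂, x₃}`, `R = {y₁, y₂}`, left degree `2`,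
and edges `Γ(x₁,1) = Γ(x₁,2) = y₁`, `Γ(x₂,1) = y₁`, `Γ(x₂,2) = y₂`,
`Γ(x₃,1) = Γ(x₃,2) = y₂`. -/
def exGraph : Fin 3 → Fin 2 → Fin 2 := ![![0, 0], ![0, 1], ![1, 1]]

/-- **Online matching is strictly stronger than offline matching.**
The concrete graph `exGraph` admits `(1,1)` offline matching up to size `2` but does
not admit `(1,1)` online matching up to size `2`. -/
theorem offline_not_online :
    OfflineMatching exGraph 1 1 2 ∧ ¬ OnlineMatching exGraph 1 1 2 := by
  constructor
  · intro S hS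
    refine ⟨fun x => if x = 1 then (if (0 : Fin 3) ∈ S then {1} else {0}) else {0},
      fun x _ => by by_cases h : x = 1 <;> by_cases h0 : (0 : Fin 3) ∈ S <;> simp [h, h0], fun p => ?_⟩
    rw [Set.ncard_le_one (Set.toFinite _)]
    rintro a ⟨haS, i, hi, hai⟩ b ⟨hbS, j, hj, hbj⟩
    by_contra hab
    have h3 : ({0, 1, 2} : Finset (Fin 3)).card ≤ S.card := by
      apply Finset.card_le_card
      intro z hz
      fin_cases a <;> fin_cases b <;> fin_cases p <;> fin_cases i <;> fin_cases j <;>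
        simp_all [exGraph] <;> split_ifs at * <;> simp_all <;> fin_cases z <;> simp_all
    have h3' : (3 : ℕ) ≤ S.card := by simpa using h3
    omega
  · rintro ⟨f, h1, h2⟩
    have h11 := (h1 [1] (by norm_num) 1).2 (by simp)
    have hne : (f [1] 1).Nonempty := by
      rw [← Finset.card_pos]
      have : (1 : ℝ) ≤ (f [1] 1).card := h11.1
      exact_mod_cast this.trans_eq rfl
    obtain ⟨i, hi⟩ := hne
    have key : ∀ (z : Fin 3) (p : Fin 2), exGraph 1 i = p → (∀ j : Fin 2, exGraph z j = p) →
        z ≠ 1 → False := by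
      intro z p hip hz hz1
      have hpre : f [1] 1 = f [1, z] 1 := h11.2 [1, z] (by norm_num) ⟨[z], rfl⟩
      have hzmem := (h1 [1, z] (by norm_num) z).2 (by simp)
      have hzne : (f [1, z] z).Nonempty := by
        rw [← Finset.card_pos]
        have : (1 : ℝ) ≤ (f [1, z] z).card := hzmem.1
        exact_mod_cast this
      obtain ⟨j, hj⟩ := hzne
      have hcard := h2 [1, z] (by norm_num) p
      have hsub : ({1, z} : Set (Fin 3)) ⊆
          {x : Fin 3 | x ∈ [1, z] ∧ ∃ i ∈ f [1, z] x, exGraph x i = p} := by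
        rintro w (rfl | rfl)
        · exact ⟨by simp, i, hpre ▸ hi, hip⟩
        · exact ⟨by simp, j, hj, hz j⟩
      have h2le : 2 ≤ {x : Fin 3 | x ∈ [1, z] ∧ ∃ i ∈ f [1, z] x, exGraph x i = p}.ncard := by
        have := Set.ncard_le_ncard hsub (Set.toFinite _)
        rwa [Set.ncard_pair hz1.symm] at this
      omega
    fin_cases i
    · exact key 0 0 rfl (by decide) (by decide)
    · exact key 2 1 rfl (by decide) (by decide)
end
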